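/- Fix nonempty finite sets Ω and A. The set of environments (u_S, u_R) satisfying scant-indifferences is generic: the set of environments for which some row-submatrix of some expanded-indifference matrix T^i fails to have full rank has Lebesgue measure zero in [0,1]^{2|A||Ω|}. -/

import Mathlib

open MeasureTheory

namespace KL

/-- `f` is a probability distribution on the finite type `X`. -/
def IsDist {X : Type} [Fintype X] (f : X → ℝ) : Prop :=
  (∀ x, 0 ≤ f x) ∧ ∑ x, f x = 1

/-- `μ₀` is an interior prior on `Ω`. -/
def IsPrior {Ω : Type} [Fintype Ω] (μ₀ : Ω → ℝ) : Prop :=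
  (∀ ω, 0 < μ₀ ω) ∧ ∑ ω, μ₀ ω = 1

variable {Ω A M : Type} [Fintype Ω] [Fintype A] [Fintype M]

/-- A messaging strategy: a distribution over messages in each state. -/
def IsMsg (σ : Ω → M → ℝ) : Prop := ∀ ω, IsDist (σ ω)

/-- An action strategy: a distribution over actions after each message. -/
def IsAct (ρ : M → A → ℝ) : Prop := ∀ m, IsDist (ρ m)

/-- Expected payoff of a profile `(σ, ρ)` for utility `u`. -/
def U (μ₀ : Ω → ℝ) (u : A × Ω → ℝ) (σ : Ω → M → ℝ) (ρ : M → A → ℝ) : ℝ :=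
  ∑ ω, ∑ m, ∑ a, μ₀ ω * σ ω m * ρ m a * u (a, ω)

/-- Sender best response. -/
def SBR (μ₀ : Ω → ℝ) (uS : A × Ω → ℝ) (σ : Ω → M → ℝ) (ρ : M → A → ℝ) : Prop :=
  ∀ σ' : Ω → M → ℝ, IsMsg σ' → U μ₀ uS σ' ρ ≤ U μ₀ uS σ ρ

/-- Receiver best response. -/
def RBR (μ₀ : Ω → ℝ) (uR : A × Ω → ℝ) (σ : Ω → M → ℝ) (ρ : M → A → ℝ) : Prop :=
  ∀ ρ' : M → A → ℝ, IsAct ρ' → U μ₀ uR σ ρ' ≤ U μ₀ uR σ ρ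

/-- A cheap-talk equilibrium: a profile of valid strategies that is S-BR and R-BR. -/
def CTEq (μ₀ : Ω → ℝ) (uS uR : A × Ω → ℝ) (σ : Ω → M → ℝ) (ρ : M → A → ℝ) : Prop :=
  IsMsg σ ∧ IsAct ρ ∧ SBR μ₀ uS σ ρ ∧ RBR μ₀ uR σ ρ

/-- A persuasion profile: a profile of valid strategies that is R-BR. -/
def PersProfile (μ₀ : Ω → ℝ) (uR : A × Ω → ℝ) (σ : Ω → M → ℝ) (ρ : M → A → ℝ) : Prop :=
  IsMsg σ ∧ IsAct ρ ∧ RBR μ₀ uR σ ρ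

/-- The cheap-talk payoff: the maximal Sender payoff over cheap-talk equilibria. -/
noncomputable def ctPayoff (μ₀ : Ω → ℝ) (uS uR : A × Ω → ℝ) : ℝ :=
  sSup {x | ∃ (σ : Ω → M → ℝ) (ρ : M → A → ℝ), CTEq μ₀ uS uR σ ρ ∧ x = U μ₀ uS σ ρ}

/-- The (Bayesian) persuasion payoff: the maximal Sender payoff over persuasion profiles. -/
noncomputable def persPayoff (μ₀ : Ω → ℝ) (uS uR : A × Ω → ℝ) : ℝ :=
  sSup {x | ∃ (σ : Ω → M → ℝ) (ρ : M → A → ℝ), PersProfile μ₀ uR σ ρ ∧ x = U μ₀ uS σ ρ}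

/-- A messaging strategy is partitional if it is deterministic in every state. -/
def Partitional (σ : Ω → M → ℝ) : Prop := ∀ ω, ∃ m, σ ω m = 1

/-- The partitional persuasion payoff. -/
noncomputable def partPersPayoff (μ₀ : Ω → ℝ) (uS uR : A × Ω → ℝ) : ℝ :=
  sSup {x | ∃ (σ : Ω → M → ℝ) (ρ : M → A → ℝ),
    Partitional σ ∧ PersProfile μ₀ uR σ ρ ∧ x = U μ₀ uS σ ρ}

/-- The partitional cheap-talk payoff. -/
noncomputable def partCtPayoff (μ₀ : Ω → ℝ) (uS uR : A × Ω → ℝ) : ℝ :=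
  sSup {x | ∃ (σ : Ω → M → ℝ) (ρ : M → A → ℝ),
    Partitional σ ∧ CTEq μ₀ uS uR σ ρ ∧ x = U μ₀ uS σ ρ}

/-- A message is on-path if it is sent with positive probability in some state. -/
def OnPath (σ : Ω → M → ℝ) (m : M) : Prop := ∃ ω, 0 < σ ω m

/-- A pure action strategy: degenerate after every message. -/
def IsPureAct (ρ : M → A → ℝ) : Prop := ∀ m, ∃ a, ρ m a = 1

/-- A pure-on-path action strategy: degenerate after every on-path message. -/
def PureOnPath (σ : Ω → M → ℝ) (ρ : M → A → ℝ) : Prop :=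
  ∀ m, OnPath σ m → ∃ a, ρ m a = 1

/-- The posterior belief induced by message `m`. -/
noncomputable def post (μ₀ : Ω → ℝ) (σ : Ω → M → ℝ) (m : M) (ω : Ω) : ℝ :=
  μ₀ ω * σ ω m / ∑ ω', μ₀ ω' * σ ω' m

/-- The cube of environments `[0,1]^(2|A||Ω|)`. -/
def EnvCube (Ω A : Type) : Set ((A × Ω → ℝ) × (A × Ω → ℝ)) :=
  {e | (∀ p, e.1 p ∈ Set.Icc (0 : ℝ) 1) ∧ ∀ p, e.2 p ∈ Set.Icc (0 : ℝ) 1}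

/-- The cube of transparent environments `[0,1]^(|A|(|Ω|+1))`, points `(v, u_R)`. -/
def TransCube (Ω A : Type) : Set ((A → ℝ) × (A × Ω → ℝ)) :=
  {e | (∀ a, e.1 a ∈ Set.Icc (0 : ℝ) 1) ∧ ∀ p, e.2 p ∈ Set.Icc (0 : ℝ) 1}

open Classical in
/-- The expanded-indifference matrix `T^i`: rows `u_S(a_j,·) − u_S(a_i,·)` for `j ≠ i`,
rows `u_R(a_j,·) − u_R(a_i,·)` for `j ≠ i`, and the rows of the identity matrix. -/
noncomputable def TMat (uS uR : A × Ω → ℝ) (i : A) :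
    Matrix (({j : A // j ≠ i} ⊕ {j : A // j ≠ i}) ⊕ Ω) Ω ℝ :=
  Matrix.of fun r ω =>
    match r with
    | Sum.inl (Sum.inl j) => uS (j.1, ω) - uS (i, ω)
    | Sum.inl (Sum.inr j) => uR (j.1, ω) - uR (i, ω)
    | Sum.inr ω' => if ω' = ω then 1 else 0

/-- Scant indifferences: every row-submatrix of every expanded-indifference matrix has
full rank (rank equal to the minimum of the number of rows and the number of columns). -/
def ScantIndiff (uS uR : A × Ω → ℝ) : Prop :=
  ∀ i : A, ∀ s : Finset (({j : A // j ≠ i} ⊕ {j : A // j ≠ i}) ⊕ Ω),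
    ((TMat uS uR i).submatrix (fun r : {x // x ∈ s} => r.1) id).rank
      = min s.card (Fintype.card Ω)

open Classical in
/-- The set `Ω_a` of states in which `a` is an ideal action for Sender. -/
noncomputable def idealStates (uS : A × Ω → ℝ) (a : A) : Finset Ω :=
  Finset.univ.filter fun ω => ∀ b, uS (b, ω) ≤ uS (a, ω)

/-- Felicitous environment. -/
def Felicitous (μ₀ : Ω → ℝ) (uS uR : A × Ω → ℝ) : Prop :=
  ∀ a a' : A, 0 ≤ ∑ ω ∈ idealStates uS a, μ₀ ω * (uR (a, ω) - uR (a', ω))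

/-- Partitional-unique-response: for every nonempty subset of states, Receiver's
expected payoff has a unique maximizer. -/
def PUR (μ₀ : Ω → ℝ) (uR : A × Ω → ℝ) : Prop :=
  ∀ S : Finset Ω, S.Nonempty →
    ∃! a : A, ∀ b : A, ∑ ω ∈ S, μ₀ ω * uR (b, ω) ≤ ∑ ω ∈ S, μ₀ ω * uR (a, ω)

/-- Jointly-inclusive environment: each action is the unique ideal action of both
players in some state. -/
def JointlyInclusive (uS uR : A × Ω → ℝ) : Prop :=
  ∀ a : A, ∃ ω : Ω,
    (∀ b, b ≠ a → uS (b, ω) < uS (a, ω)) ∧ ∀ b, b ≠ a → uR (b, ω) < uR (a, ω)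

section ScantAux

/-- The zero set of a nonzero multivariate polynomial over `Fin n` is Lebesgue-null. -/
theorem mv_zero_fin (n : ℕ) :
    ∀ (p : MvPolynomial (Fin n) ℝ), p ≠ 0 →
      volume {x : Fin n → ℝ | MvPolynomial.eval x p = 0} = 0 := by
  induction n with
  | zero =>
    intro p hp
    obtain ⟨c, rfl⟩ := MvPolynomial.C_surjective (Fin 0) p
    have hc : c ≠ 0 := fun h => hp (by simp [h])
    have : {x : Fin 0 → ℝ | MvPolynomial.eval x (MvPolynomial.C c) = 0} = (∅ : Set (Fin 0 → ℝ)) := by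
      ext x; simp [hc]
    rw [this]; exact measure_empty
  | succ n ih =>
    intro p hp
    classical
    have hq0 : MvPolynomial.finSuccEquiv ℝ n p ≠ 0 := fun h =>
      hp ((MvPolynomial.finSuccEquiv ℝ n).injective (by rw [h, map_zero]))
    set q := MvPolynomial.finSuccEquiv ℝ n p with hqdef
    set B : Set (Fin n → ℝ) := {s | MvPolynomial.eval s q.leadingCoeff = 0} with hBdef
    have hB : volume B = 0 := ih _ (Polynomial.leadingCoeff_ne_zero.mpr hq0)
    have hBm : MeasurableSet B :=
      (isClosed_eq (MvPolynomial.continuous_eval _) continuous_const).measurableSet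
    set T : Set ((Fin n → ℝ) × ℝ) :=
      {sy | MvPolynomial.eval (Fin.cons sy.2 sy.1) p = 0 ∧ sy.1 ∉ B} with hTdef
    have hcont : Continuous fun sy : (Fin n → ℝ) × ℝ =>
        MvPolynomial.eval (Fin.cons sy.2 sy.1 : Fin (n+1) → ℝ) p := by
      apply (MvPolynomial.continuous_eval _).comp
      refine continuous_pi fun j => ?_
      refine Fin.cases ?_ ?_ j
      · simpa using continuous_snd
      · intro k
        simp only [Fin.cons_succ]
        fun_prop
    have hTm : MeasurableSet T := by
      have : T = ((fun sy : (Fin n → ℝ) × ℝ =>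
          MvPolynomial.eval (Fin.cons sy.2 sy.1 : Fin (n+1) → ℝ) p) ⁻¹' {0})
          ∩ ((fun sy : (Fin n → ℝ) × ℝ => sy.1) ⁻¹' Bᶜ) := by
        ext sy; simp [hTdef, Set.mem_setOf_eq]
      rw [this]
      exact (hcont.measurable (measurableSet_singleton 0)).inter (measurable_fst hBm.compl)
    have hT : (volume : Measure (Fin n → ℝ)).prod (volume : Measure ℝ) T = 0 := by
      rw [MeasureTheory.Measure.measure_prod_null hTm]
      refine ae_of_all _ fun s => ?_
      by_cases hs : s ∈ B
      · have : Prod.mk s ⁻¹' T = (∅ : Set ℝ) := by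
          ext y; simp [hTdef, hs]
        simp [this]
      · have hqs : q.map (MvPolynomial.eval s) ≠ 0 := by
          intro h
          apply hs
          have h2 : (q.map (MvPolynomial.eval s)).coeff q.natDegree = 0 := by rw [h]; simp
          rw [Polynomial.coeff_map] at h2
          show MvPolynomial.eval s q.leadingCoeff = 0
          exact h2
        have hfin : {y : ℝ | (q.map (MvPolynomial.eval s)).IsRoot y}.Finite :=
          Polynomial.finite_setOf_isRoot hqs
        have hsub : Prod.mk s ⁻¹' T ⊆ {y : ℝ | (q.map (MvPolynomial.eval s)).IsRoot y} := by
          intro y hy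
          have h1 : MvPolynomial.eval (Fin.cons y s) p = 0 := hy.1
          rw [MvPolynomial.eval_eq_eval_mv_eval'] at h1
          exact h1
        simpa using measure_mono_null hsub (hfin.measure_zero volume)
    have hmp := MeasureTheory.volume_preserving_piFinSuccAbove (fun _ : Fin (n+1) => ℝ) 0
    set ψ := MeasurableEquiv.piFinSuccAbove (fun _ : Fin (n+1) => ℝ) 0 with hψdef
    have key : {x : Fin (n+1) → ℝ | MvPolynomial.eval x p = 0}
        ⊆ ψ ⁻¹' ((Set.univ ×ˢ B) ∪ (Prod.swap ⁻¹' T)) := by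
      intro x hx
      have hψx : ψ x = (x 0, fun j => x ((0 : Fin (n+1)).succAbove j)) := rfl
      have hcons : (Fin.cons (ψ x).1 (ψ x).2 : Fin (n+1) → ℝ) = x := by
        funext j
        refine Fin.cases ?_ ?_ j
        · rw [hψx, Fin.cons_zero]
        · intro k
          rw [hψx, Fin.cons_succ]
          show x ((0 : Fin (n+1)).succAbove k) = x k.succ
          rw [Fin.succAbove_zero]
      simp only [Set.mem_preimage, Set.mem_union, Set.mem_prod, Set.mem_univ, true_and]
      by_cases hb : (ψ x).2 ∈ B
      · exact Or.inl hb
      · refine Or.inr ?_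
        show MvPolynomial.eval (Fin.cons (ψ x).1 (ψ x).2) p = 0 ∧ (ψ x).2 ∉ B
        exact ⟨by rw [hcons]; exact hx, hb⟩
    refine measure_mono_null key ?_
    rw [hmp.measure_preimage_emb ψ.measurableEmbedding]
    refine measure_union_null ?_ ?_
    · rw [MeasureTheory.Measure.volume_eq_prod, MeasureTheory.Measure.prod_prod, hB, mul_zero]
    · rw [MeasureTheory.Measure.volume_eq_prod]
      exact ((MeasureTheory.Measure.measurePreserving_swap (μ := (volume : Measure ℝ))
        (ν := (volume : Measure (Fin n → ℝ)))).measure_preimage hTm.nullMeasurableSet).trans hT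

/-- The zero set of a nonzero multivariate polynomial over a finite type is null. -/
theorem mv_zero_set_null {σ : Type} [Fintype σ] (p : MvPolynomial σ ℝ) (hp : p ≠ 0) :
    volume {x : σ → ℝ | MvPolynomial.eval x p = 0} = 0 := by
  classical
  set e := Fintype.equivFin σ with hedef
  set p₂ : MvPolynomial (Fin (Fintype.card σ)) ℝ := MvPolynomial.rename e p with hp₂def
  have hp₂ : p₂ ≠ 0 := fun h =>
    hp (MvPolynomial.rename_injective (R := ℝ) e e.injective (by rw [← hp₂def, h, map_zero]))
  have hmp := MeasureTheory.volume_measurePreserving_piCongrLeft (fun _ : σ => ℝ) e.symm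
  set φ := MeasurableEquiv.piCongrLeft (fun _ : σ => ℝ) e.symm with hφdef
  have hφ : ∀ g : Fin (Fintype.card σ) → ℝ, φ g = g ∘ e := by
    intro g; funext ω
    have h1 := MeasurableEquiv.piCongrLeft_apply_apply (β := fun _ : σ => ℝ) e.symm g (e ω)
    simpa using h1
  have hZ : ⇑φ ⁻¹' {x : σ → ℝ | MvPolynomial.eval x p = 0}
      = {g : Fin (Fintype.card σ) → ℝ | MvPolynomial.eval g p₂ = 0} := by
    ext g
    simp only [Set.mem_preimage, Set.mem_setOf_eq, hp₂def, MvPolynomial.eval_rename, hφ g]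
  have hmeas : MeasurableSet {x : σ → ℝ | MvPolynomial.eval x p = 0} :=
    (isClosed_eq (MvPolynomial.continuous_eval _) continuous_const).measurableSet
  have := hmp.measure_preimage hmeas.nullMeasurableSet
  rw [hZ] at this
  rw [← this]
  exact mv_zero_fin _ _ hp₂

/-- Product version: the zero set of a nonzero polynomial with sum-indexed variables. -/
theorem mv_zero_set_null_prod {κ : Type} [Fintype κ] (P : MvPolynomial (κ ⊕ κ) ℝ) (hP : P ≠ 0) :
    volume {e : (κ → ℝ) × (κ → ℝ) | MvPolynomial.eval (Sum.elim e.1 e.2) P = 0} = 0 := by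
  classical
  have hmp := MeasureTheory.volume_measurePreserving_sumPiEquivProdPi_symm (fun _ : κ ⊕ κ => ℝ)
  set ψ := (MeasurableEquiv.sumPiEquivProdPi (fun _ : κ ⊕ κ => ℝ)).symm with hψdef
  have hψ : ∀ e : (κ → ℝ) × (κ → ℝ), ψ e = Sum.elim e.1 e.2 := by
    intro e; funext k
    cases k <;> rfl
  have h1 : {e : (κ → ℝ) × (κ → ℝ) | MvPolynomial.eval (Sum.elim e.1 e.2) P = 0}
      = ⇑ψ ⁻¹' {x : κ ⊕ κ → ℝ | MvPolynomial.eval x P = 0} := by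
    ext e
    simp only [Set.mem_preimage, Set.mem_setOf_eq, hψ e]
  have hmeas : MeasurableSet {x : κ ⊕ κ → ℝ | MvPolynomial.eval x P = 0} :=
    (isClosed_eq (MvPolynomial.continuous_eval _) continuous_const).measurableSet
  rw [h1, hmp.measure_preimage hmeas.nullMeasurableSet]
  exact mv_zero_set_null P hP

theorem rank_submatrix_rows_le {m m' k : Type} [Fintype m] [Fintype m'] [Fintype k]
    (A : Matrix m k ℝ) (f : m' → m) : (A.submatrix f id).rank ≤ A.rank := by
  rw [Matrix.rank, Matrix.rank]
  have h : (A.submatrix f id).mulVecLin = (LinearMap.funLeft ℝ ℝ f).comp A.mulVecLin := by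
    refine LinearMap.ext fun v => funext fun i => ?_
    simp [Matrix.mulVec, dotProduct, LinearMap.funLeft_apply]
  rw [h, LinearMap.range_comp]
  exact Submodule.finrank_map_le _ _

theorem rank_submatrix_cols_le {m k k' : Type} [Fintype m] [Fintype k] [Fintype k']
    (A : Matrix m k ℝ) (c : k' → k) : (A.submatrix id c).rank ≤ A.rank := by
  classical
  rw [Matrix.rank, Matrix.rank]
  apply Submodule.finrank_mono
  rintro y ⟨v, rfl⟩
  refine ⟨fun ω => ∑ j : k', if c j = ω then v j else 0, ?_⟩
  funext i
  simp only [Matrix.mulVecLin_apply, Matrix.mulVec, dotProduct, Matrix.submatrix_apply,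
    id_eq, Finset.mul_sum, mul_ite, mul_zero]
  rw [Finset.sum_comm]
  simp

open Classical in
noncomputable def TPoly (A Ω : Type) (i : A) :
    Matrix (({j : A // j ≠ i} ⊕ {j : A // j ≠ i}) ⊕ Ω) Ω (MvPolynomial ((A × Ω) ⊕ (A × Ω)) ℝ) :=
  Matrix.of fun r ω =>
    match r with
    | Sum.inl (Sum.inl j) => MvPolynomial.X (Sum.inl (j.1, ω)) - MvPolynomial.X (Sum.inl (i, ω))
    | Sum.inl (Sum.inr j) => MvPolynomial.X (Sum.inr (j.1, ω)) - MvPolynomial.X (Sum.inr (i, ω))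
    | Sum.inr ω' => if ω' = ω then 1 else 0

theorem TPoly_map {Ω A : Type} (uS uR : A × Ω → ℝ) (i : A) :
    (TPoly A Ω i).map (MvPolynomial.eval (Sum.elim uS uR)) = TMat uS uR i := by
  ext r ω
  cases r with
  | inl j =>
    cases j with
    | inl j => simp [TPoly, TMat]
    | inr j => simp [TPoly, TMat]
  | inr ω' => simp [TPoly, TMat, apply_ite (MvPolynomial.eval (Sum.elim uS uR))]

open Classical in
noncomputable def PPoly (A Ω : Type) [Fintype Ω] [Fintype A] (i : A)
    (s : Finset (({j : A // j ≠ i} ⊕ {j : A // j ≠ i}) ⊕ Ω)) :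
    MvPolynomial ((A × Ω) ⊕ (A × Ω)) ℝ :=
  ∑ c : {x // x ∈ s} → Ω,
    (((TPoly A Ω i).submatrix (fun r : {x // x ∈ s} => r.1) c).det) ^ 2

open Classical in
theorem eval_PPoly {Ω A : Type} [Fintype Ω] [Fintype A] (uS uR : A × Ω → ℝ) (i : A)
    (s : Finset (({j : A // j ≠ i} ⊕ {j : A // j ≠ i}) ⊕ Ω)) :
    MvPolynomial.eval (Sum.elim uS uR) (PPoly A Ω i s)
      = ∑ c : {x // x ∈ s} → Ω,
        (((TMat uS uR i).submatrix (fun r : {x // x ∈ s} => r.1) c).det) ^ 2 := by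
  rw [PPoly, map_sum]
  refine Finset.sum_congr rfl fun c _ => ?_
  rw [map_pow]
  congr 1
  rw [← TPoly_map uS uR i]
  rw [(MvPolynomial.eval (Sum.elim uS uR)).map_det]
  congr 1

open Classical in
theorem eval_PPoly_eq_zero {Ω A : Type} [Fintype Ω] [Fintype A] (uS uR : A × Ω → ℝ) (i : A)
    (s : Finset (({j : A // j ≠ i} ⊕ {j : A // j ≠ i}) ⊕ Ω))
    (hcard : s.card ≤ Fintype.card Ω)
    (hrank : ((TMat uS uR i).submatrix (fun r : {x // x ∈ s} => r.1) id).rank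
      ≠ min s.card (Fintype.card Ω)) :
    MvPolynomial.eval (Sum.elim uS uR) (PPoly A Ω i s) = 0 := by
  set M := (TMat uS uR i).submatrix (fun r : {x // x ∈ s} => r.1) id with hM
  have hle : M.rank ≤ s.card := by
    simpa [Fintype.card_coe] using M.rank_le_card_height
  have hlt : M.rank < s.card := lt_of_le_of_ne hle (by rwa [min_eq_left hcard] at hrank)
  rw [eval_PPoly]
  refine Finset.sum_eq_zero fun c _ => ?_
  have hdet : ((TMat uS uR i).submatrix (fun r : {x // x ∈ s} => r.1) c).det = 0 := by
    by_contra hd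
    have hunit : IsUnit ((TMat uS uR i).submatrix (fun r : {x // x ∈ s} => r.1) c) :=
      (Matrix.isUnit_iff_isUnit_det _).mpr (isUnit_iff_ne_zero.mpr hd)
    have h1 : ((TMat uS uR i).submatrix (fun r : {x // x ∈ s} => r.1) c).rank
        = Fintype.card {x // x ∈ s} := Matrix.rank_of_isUnit _ hunit
    have h2 : (TMat uS uR i).submatrix (fun r : {x // x ∈ s} => r.1) c = M.submatrix id c := by
      ext r ω; rfl
    have h3 := rank_submatrix_cols_le M c
    rw [← h2, h1, Fintype.card_coe] at h3
    exact lt_irrefl _ (h3.trans_lt hlt)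
  rw [hdet]
  ring

open Classical in
theorem PPoly_ne_zero {Ω A : Type} [Fintype Ω] [Fintype A] (i : A)
    (s : Finset (({j : A // j ≠ i} ⊕ {j : A // j ≠ i}) ⊕ Ω))
    (hcard : s.card ≤ Fintype.card Ω) :
    PPoly A Ω i s ≠ 0 := by
  classical
  -- the set of states whose identity row belongs to `s`
  set K : Finset Ω := Finset.univ.filter (fun ω => Sum.inr ω ∈ s) with hKdef
  set free : Finset (({j : A // j ≠ i} ⊕ {j : A // j ≠ i}) ⊕ Ω) :=
    s.filter (fun x => ¬ ∃ ω', x = Sum.inr ω') with hfreedef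
  have hK : K.card = (s.filter (fun x => ∃ ω', x = Sum.inr ω')).card := by
    apply Finset.card_bij (fun ω _ => Sum.inr ω)
    · intro ω hω
      simp only [hKdef, Finset.mem_filter, Finset.mem_univ, true_and] at hω
      exact Finset.mem_filter.mpr ⟨hω, ⟨ω, rfl⟩⟩
    · intro a _ b _ h
      exact Sum.inr.inj h
    · intro x hx
      obtain ⟨hxs, ω', rfl⟩ := Finset.mem_filter.mp hx
      exact ⟨ω', by simp [hKdef, hxs], rfl⟩
  have hsplit : (s.filter (fun x => ∃ ω', x = Sum.inr ω')).card + free.card = s.card :=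
    Finset.card_filter_add_card_filter_not _
  have hKle : K.card ≤ Fintype.card Ω := by
    simpa using (Finset.card_filter_le Finset.univ (fun ω => Sum.inr ω ∈ s)).trans
      (le_of_eq Finset.card_univ)
  have hcompl : Kᶜ.card = Fintype.card Ω - K.card := by
    simp [Finset.card_compl]
  have hfreeK : free.card ≤ Kᶜ.card := by omega
  obtain ⟨g⟩ : Nonempty ({x // x ∈ free} ↪ {ω // ω ∈ Kᶜ}) := by
    apply Function.Embedding.nonempty_of_card_le
    simp only [Fintype.card_coe]
    exact hfreeK
  have hKc : ∀ z : {ω // ω ∈ Kᶜ}, Sum.inr z.1 ∉ s := by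
    intro z
    have hz := z.2
    simp only [Finset.mem_compl, hKdef, Finset.mem_filter, Finset.mem_univ, true_and] at hz
    exact hz
  -- the injective column assignment
  set t : {x // x ∈ s} → Ω := fun r =>
    if h : ∃ ω', r.1 = Sum.inr ω' then h.choose
    else (g ⟨r.1, Finset.mem_filter.mpr ⟨r.2, h⟩⟩).1 with htdef
  have htinr : ∀ (r : {x // x ∈ s}) (ω' : Ω), r.1 = Sum.inr ω' → t r = ω' := by
    intro r ω' h
    have hex : ∃ ω'', r.1 = Sum.inr ω'' := ⟨ω', h⟩
    simp only [htdef, dif_pos hex]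
    exact (Sum.inr.inj (h.symm.trans hex.choose_spec)).symm
  have htfree : ∀ (r : {x // x ∈ s}), (¬ ∃ ω', r.1 = Sum.inr ω') → Sum.inr (t r) ∉ s := by
    intro r h
    simp only [htdef, dif_neg h]
    exact hKc _
  have htinj : Function.Injective t := by
    intro r r' h
    by_cases h1 : ∃ ω', r.1 = Sum.inr ω' <;> by_cases h2 : ∃ ω'', r'.1 = Sum.inr ω''
    · obtain ⟨ω1, e1⟩ := h1
      obtain ⟨ω2, e2⟩ := h2
      rw [htinr r ω1 e1, htinr r' ω2 e2] at h
      apply Subtype.ext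
      rw [e1, e2, h]
    · exfalso
      obtain ⟨ω1, e1⟩ := h1
      have h3 : Sum.inr (t r') ∉ s := htfree r' h2
      rw [← h, htinr r ω1 e1] at h3
      exact h3 (e1 ▸ r.2)
    · exfalso
      obtain ⟨ω2, e2⟩ := h2
      have h3 : Sum.inr (t r) ∉ s := htfree r h1
      rw [h, htinr r' ω2 e2] at h3
      exact h3 (e2 ▸ r'.2)
    · simp only [htdef, dif_neg h1, dif_neg h2] at h
      have h4 := g.injective (Subtype.ext h)
      exact Subtype.ext (congrArg (fun z : {x // x ∈ free} => z.1) h4)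
  -- the witness environment
  set uS : A × Ω → ℝ := fun p =>
    if h : ∃ (ha : p.1 ≠ i), (Sum.inl (Sum.inl ⟨p.1, ha⟩) :
        ({j : A // j ≠ i} ⊕ {j : A // j ≠ i}) ⊕ Ω) ∈ s then
      (if t ⟨Sum.inl (Sum.inl ⟨p.1, h.choose⟩), h.choose_spec⟩ = p.2 then 1 else 0)
    else 0 with huSdef
  set uR : A × Ω → ℝ := fun p =>
    if h : ∃ (ha : p.1 ≠ i), (Sum.inl (Sum.inr ⟨p.1, ha⟩) :
        ({j : A // j ≠ i} ⊕ {j : A // j ≠ i}) ⊕ Ω) ∈ s then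
      (if t ⟨Sum.inl (Sum.inr ⟨p.1, h.choose⟩), h.choose_spec⟩ = p.2 then 1 else 0)
    else 0 with huRdef
  have hrow : ∀ (r : {x // x ∈ s}) (ω : Ω), TMat uS uR i r.1 ω = if t r = ω then 1 else 0 := by
    rintro ⟨x, hx⟩ ω
    rcases x with (j | j) | ω'
    · have hTM : TMat uS uR i (Sum.inl (Sum.inl j)) ω = uS (j.1, ω) - uS (i, ω) := rfl
      have hi0 : uS (i, ω) = 0 := by
        simp only [huSdef]
        rw [dif_neg]
        rintro ⟨ha, -⟩
        exact ha rfl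
      have hex : ∃ (ha : j.1 ≠ i), (Sum.inl (Sum.inl ⟨j.1, ha⟩) :
          ({j : A // j ≠ i} ⊕ {j : A // j ≠ i}) ⊕ Ω) ∈ s := ⟨j.2, hx⟩
      have hj : uS (j.1, ω) = if t ⟨Sum.inl (Sum.inl j), hx⟩ = ω then 1 else 0 := by
        simp only [huSdef]
        rw [dif_pos hex]
      rw [hTM, hi0, hj, sub_zero]
    · have hTM : TMat uS uR i (Sum.inl (Sum.inr j)) ω = uR (j.1, ω) - uR (i, ω) := rfl
      have hi0 : uR (i, ω) = 0 := by
        simp only [huRdef]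
        rw [dif_neg]
        rintro ⟨ha, -⟩
        exact ha rfl
      have hex : ∃ (ha : j.1 ≠ i), (Sum.inl (Sum.inr ⟨j.1, ha⟩) :
          ({j : A // j ≠ i} ⊕ {j : A // j ≠ i}) ⊕ Ω) ∈ s := ⟨j.2, hx⟩
      have hj : uR (j.1, ω) = if t ⟨Sum.inl (Sum.inr j), hx⟩ = ω then 1 else 0 := by
        simp only [huRdef]
        rw [dif_pos hex]
      rw [hTM, hi0, hj, sub_zero]
    · have h1 : t ⟨Sum.inr ω', hx⟩ = ω' := htinr _ _ rfl
      show (if ω' = ω then 1 else 0) = if t ⟨Sum.inr ω', hx⟩ = ω then 1 else 0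
      rw [h1]
  have hM1 : (TMat uS uR i).submatrix (fun r : {x // x ∈ s} => r.1) t = 1 := by
    ext r r'
    rw [Matrix.submatrix_apply, hrow r (t r'), Matrix.one_apply]
    exact if_congr ⟨fun h => htinj h, fun h => by rw [h]⟩ rfl rfl
  intro h0
  have heval := eval_PPoly uS uR i s
  rw [h0, map_zero] at heval
  have hterm := (Finset.sum_eq_zero_iff_of_nonneg
    (fun c _ => sq_nonneg _)).mp heval.symm t (Finset.mem_univ t)
  simp only [hM1, Matrix.det_one] at hterm
  norm_num at hterm


end ScantAux

/-- Lemma 2 (Kamenica–Lin): the set of scant-indifferences environments is generic: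
the set of environments where some row-submatrix of some expanded-indifference
matrix fails to have full rank has Lebesgue measure zero. -/
theorem scant_indifferences_generic
    (Ω A : Type) [Fintype Ω] [Fintype A] [Nonempty Ω] [Nonempty A] :
    volume (EnvCube Ω A ∩ {e | ¬ ScantIndiff e.1 e.2}) = 0 := by
  classical
  set n := Fintype.card Ω with hn
  have key : EnvCube Ω A ∩ {e | ¬ ScantIndiff e.1 e.2} ⊆
      ⋃ (p : Σ i : A, Finset (({j : A // j ≠ i} ⊕ {j : A // j ≠ i}) ⊕ Ω)),
        {e : (A × Ω → ℝ) × (A × Ω → ℝ) | p.2.card ≤ n ∧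
          MvPolynomial.eval (Sum.elim e.1 e.2) (PPoly A Ω p.1 p.2) = 0} := by
    rintro ⟨uS, uR⟩ ⟨-, hbad⟩
    simp only [Set.mem_setOf_eq, ScantIndiff, not_forall] at hbad
    obtain ⟨i, s, hs⟩ := hbad
    by_cases hc : s.card ≤ n
    · exact Set.mem_iUnion.mpr ⟨⟨i, s⟩, hc, eval_PPoly_eq_zero uS uR i s hc hs⟩
    · push_neg at hc
      obtain ⟨s', hsub, hcard'⟩ := Finset.exists_subset_card_eq (le_of_lt hc)
      refine Set.mem_iUnion.mpr ⟨⟨i, s'⟩, le_of_eq hcard',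
        eval_PPoly_eq_zero uS uR i s' (le_of_eq hcard') ?_⟩
      have hw : ((TMat uS uR i).submatrix (fun r : {x // x ∈ s} => r.1) id).rank ≤ n :=
        ((TMat uS uR i).submatrix (fun r : {x // x ∈ s} => r.1) id).rank_le_card_width
      have hlt : ((TMat uS uR i).submatrix (fun r : {x // x ∈ s} => r.1) id).rank < n :=
        lt_of_le_of_ne hw (by rwa [min_eq_right (le_of_lt hc)] at hs)
      have heq : (TMat uS uR i).submatrix (fun r : {x // x ∈ s'} => r.1) id
          = ((TMat uS uR i).submatrix (fun r : {x // x ∈ s} => r.1) id).submatrix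
            (fun r : {x // x ∈ s'} => (⟨r.1, hsub r.2⟩ : {x // x ∈ s})) id := by
        ext r ω; rfl
      have hle2 := rank_submatrix_rows_le
        ((TMat uS uR i).submatrix (fun r : {x // x ∈ s} => r.1) id)
        (fun r : {x // x ∈ s'} => (⟨r.1, hsub r.2⟩ : {x // x ∈ s}))
      rw [← heq] at hle2
      intro hcontra
      have hlt2 : ((TMat uS uR i).submatrix (fun r : {x // x ∈ s'} => r.1) id).rank < n :=
        hle2.trans_lt hlt
      rw [hcontra, min_eq_left (le_of_eq hcard'), hcard'] at hlt2
      exact lt_irrefl _ hlt2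
  refine measure_mono_null key (measure_iUnion_null fun p => ?_)
  by_cases hc : p.2.card ≤ n
  · exact measure_mono_null (fun e he => he.2)
      (mv_zero_set_null_prod _ (PPoly_ne_zero p.1 p.2 hc))
  · have hempty : {e : (A × Ω → ℝ) × (A × Ω → ℝ) | p.2.card ≤ n ∧
        MvPolynomial.eval (Sum.elim e.1 e.2) (PPoly A Ω p.1 p.2) = 0} = ∅ := by
      ext e; simp [hc]
    rw [hempty]; exact measure_empty

end KL
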